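/- The 4-dimensional complex algebra d₇₄ with basis e₁, e₂, e₃, e₄ and nonzero products e₃·e₃ = e₂, e₄·e₁ = e₂, e₁·e₄ = e₂, e₄·e₃ = e₁, e₃·e₄ = e₁, e₄·e₄ = e₃ is associative, commutative, and satisfies A⁵ = 0 but A⁴ ≠ 0; in fact it is isomorphic to the algebra x·ℂ[x]/(x⁵) via e₄ ↦ x, e₃ ↦ x², e₁ ↦ x³, e₂ ↦ x⁴. -/

import Mathlib

/-- The multiplication of the algebra `d₇₄` on `ℂ⁴` with basis `e₁,…,e₄`:
`e₃e₃ = e₂`, `e₄e₁ = e₂`, `e₁e₄ = e₂`, `e₄e₃ = e₁`, `e₃e₄ = e₁`, `e₄e₄ = e₃`,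
all other basis products zero (0-indexed components). -/
def mul74 (x y : Fin 4 → ℂ) : Fin 4 → ℂ :=
  ![x 3 * y 2 + x 2 * y 3,
    x 2 * y 2 + x 3 * y 0 + x 0 * y 3,
    x 3 * y 3, 0]

/-- The map `e₄ ↦ x`, `e₃ ↦ x²`, `e₁ ↦ x³`, `e₂ ↦ x⁴` into `ℂ[x]/(x⁵)`. -/
noncomputable def phi74 (v : Fin 4 → ℂ) :
    Polynomial ℂ ⧸ Ideal.span {(Polynomial.X : Polynomial ℂ) ^ 5} :=
  Ideal.Quotient.mk _
    (Polynomial.C (v 3) * Polynomial.X + Polynomial.C (v 2) * Polynomial.X ^ 2 +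
      Polynomial.C (v 0) * Polynomial.X ^ 3 + Polynomial.C (v 1) * Polynomial.X ^ 4)

open Polynomial
theorem d74_properties :
    (∀ x y z : Fin 4 → ℂ, mul74 (mul74 x y) z = mul74 x (mul74 y z)) ∧
    (∀ x y : Fin 4 → ℂ, mul74 x y = mul74 y x) ∧
    (∀ a b c d e : Fin 4 → ℂ, mul74 (mul74 (mul74 (mul74 a b) c) d) e = 0) ∧
    (∃ a b c d : Fin 4 → ℂ, mul74 (mul74 (mul74 a b) c) d ≠ 0) ∧
    Function.Injective phi74 ∧
    (∀ v w : Fin 4 → ℂ, phi74 (v + w) = phi74 v + phi74 w) ∧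
    (∀ (c : ℂ) (v : Fin 4 → ℂ), phi74 (c • v) = c • phi74 v) ∧
    (∀ v w : Fin 4 → ℂ, phi74 (mul74 v w) = phi74 v * phi74 w) ∧
    Set.range phi74 =
      (Ideal.span {Ideal.Quotient.mk (Ideal.span {(Polynomial.X : Polynomial ℂ) ^ 5})
        Polynomial.X} : Set (Polynomial ℂ ⧸ Ideal.span {(Polynomial.X : Polynomial ℂ) ^ 5})) := by
  refine ⟨?_, ?_, ?_, ?_, ?_, ?_, ?_, ?_, ?_⟩
  · intro x y z; funext i; fin_cases i <;> simp [mul74] <;> ring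
  · intro x y; funext i; fin_cases i <;> simp [mul74] <;> ring
  · intro a b c d e; funext i; fin_cases i <;> simp [mul74] <;> ring
  · refine ⟨![0,0,0,1], ![0,0,0,1], ![0,0,0,1], ![0,0,0,1], ?_⟩
    have h1 : mul74 ![0,0,0,1] ![0,0,0,1] = ![0,0,1,0] := by
      funext i; fin_cases i <;> simp [mul74]
    have h2 : mul74 ![(0:ℂ),0,1,0] ![0,0,0,1] = ![1,0,0,0] := by
      funext i; fin_cases i <;> simp [mul74]
    have h3 : mul74 ![(1:ℂ),0,0,0] ![0,0,0,1] = ![0,1,0,0] := by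
      funext i; fin_cases i <;> simp [mul74]
    rw [h1, h2, h3]
    intro h
    have := congrFun h 1
    simp at this
  · intro v w h
    rw [phi74, phi74, Ideal.Quotient.eq, Ideal.mem_span_singleton] at h
    have hd : (C (v 3) * X + C (v 2) * X ^ 2 + C (v 0) * X ^ 3 + C (v 1) * X ^ 4 : ℂ[X]) =
        C (w 3) * X + C (w 2) * X ^ 2 + C (w 0) * X ^ 3 + C (w 1) * X ^ 4 := by
      rw [← sub_eq_zero]
      rw [Polynomial.X_pow_dvd_iff] at h
      ext n
      by_cases hn : n < 5
      · exact h _ hn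
      · have h1 : n ≠ 1 := by omega
        have h2 : n ≠ 2 := by omega
        have h3 : n ≠ 3 := by omega
        have h4 : n ≠ 4 := by omega
        simp [coeff_X, h1, h2, h3, h4, Ne.symm h1, Ne.symm h2, Ne.symm h3, Ne.symm h4]
    funext i
    fin_cases i
    · have := congrArg (fun p => p.coeff 3) hd; simpa [coeff_X] using this
    · have := congrArg (fun p => p.coeff 4) hd; simpa [coeff_X] using this
    · have := congrArg (fun p => p.coeff 2) hd; simpa [coeff_X] using this
    · have := congrArg (fun p => p.coeff 1) hd; simpa [coeff_X] using this
  · intro v w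
    rw [phi74, phi74, phi74, ← map_add]
    refine congrArg _ ?_
    simp only [Pi.add_apply, map_add]
    ring
  · intro c v
    have key : ∀ p : ℂ[X], c • Ideal.Quotient.mk (Ideal.span {(X : ℂ[X]) ^ 5}) p =
        Ideal.Quotient.mk _ (C c * p) := by
      intro p
      rw [← Polynomial.smul_eq_C_mul, ← Ideal.Quotient.mkₐ_eq_mk ℂ, map_smul]
    rw [phi74, phi74, key]
    congr 1
    simp only [Pi.smul_apply, smul_eq_mul, map_mul]
    ring
  · intro v w
    rw [phi74, phi74, phi74, ← map_mul, Ideal.Quotient.eq, Ideal.mem_span_singleton]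
    have : ((C ((mul74 v w) 3)) * X + C ((mul74 v w) 2) * X ^ 2 + C ((mul74 v w) 0) * X ^ 3 +
        C ((mul74 v w) 1) * X ^ 4 : ℂ[X]) -
        (C (v 3) * X + C (v 2) * X ^ 2 + C (v 0) * X ^ 3 + C (v 1) * X ^ 4) *
        (C (w 3) * X + C (w 2) * X ^ 2 + C (w 0) * X ^ 3 + C (w 1) * X ^ 4) =
        - X ^ 5 * (C (v 3 * w 1 + v 2 * w 0 + v 0 * w 2 + v 1 * w 3)
          + C (v 2 * w 1 + v 0 * w 0 + v 1 * w 2) * X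
          + C (v 0 * w 1 + v 1 * w 0) * X ^ 2
          + C (v 1 * w 1) * X ^ 3) := by
      simp only [mul74, Matrix.cons_val_zero, Matrix.cons_val_one, Matrix.head_cons,
        Matrix.cons_val_two, Matrix.tail_cons, Matrix.cons_val_three, map_add, map_mul, map_zero]
      ring
    rw [this]
    exact dvd_mul_of_dvd_left (dvd_neg.mpr dvd_rfl) _
  · ext y
    simp only [Set.mem_range, SetLike.mem_coe, Ideal.mem_span_singleton]
    constructor
    · rintro ⟨v, rfl⟩
      refine ⟨Ideal.Quotient.mk _ (C (v 3) + C (v 2) * X + C (v 0) * X ^ 2 + C (v 1) * X ^ 3), ?_⟩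
      rw [phi74, ← map_mul]
      congr 1
      ring
    · rintro ⟨z, rfl⟩
      obtain ⟨p, rfl⟩ := Ideal.Quotient.mk_surjective z
      refine ⟨![p.coeff 2, p.coeff 3, p.coeff 1, p.coeff 0], ?_⟩
      rw [phi74, ← map_mul, Ideal.Quotient.eq, Ideal.mem_span_singleton]
      have key : (X : ℂ[X]) ^ 4 ∣
          p - (C (p.coeff 0) + C (p.coeff 1) * X + C (p.coeff 2) * X ^ 2 +
            C (p.coeff 3) * X ^ 3) := by
        rw [Polynomial.X_pow_dvd_iff]
        intro d hd
        interval_cases d <;> simp [coeff_X, coeff_one]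
      obtain ⟨q, hq⟩ := key
      have : (C (![p.coeff 2, p.coeff 3, p.coeff 1, p.coeff 0] 3) * X +
          C (![p.coeff 2, p.coeff 3, p.coeff 1, p.coeff 0] 2) * X ^ 2 +
          C (![p.coeff 2, p.coeff 3, p.coeff 1, p.coeff 0] 0) * X ^ 3 +
          C (![p.coeff 2, p.coeff 3, p.coeff 1, p.coeff 0] 1) * X ^ 4 : ℂ[X]) - X * p =
          -X * (p - (C (p.coeff 0) + C (p.coeff 1) * X + C (p.coeff 2) * X ^ 2 +
            C (p.coeff 3) * X ^ 3)) := by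
        simp only [Matrix.cons_val_zero, Matrix.cons_val_one, Matrix.head_cons,
          Matrix.cons_val_two, Matrix.tail_cons, Matrix.cons_val_three]
        ring
      rw [this, hq]
      exact ⟨-q, by ring⟩
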